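/- Let α₁, ..., αₙ be real numbers with dim_ℚ span_ℚ{α₁, ..., αₙ} = m. Then there exists a matrix G ∈ GL_n(ℤ) and real numbers β₁, ..., βₘ such that G·(α₁, ..., αₙ)ᵀ = (β₁, ..., βₘ, 0, ..., 0)ᵀ. -/

import Mathlib

/-- Auxiliary equivalence: the indices of `Fin n` that are `≥ m` form a type of
cardinality `n - m`. -/
private def auxFinEquiv (n m : ℕ) (hmn : m ≤ n) :
    {i : Fin n // m ≤ (i : ℕ)} ≃ Fin (n - m) where
  toFun x := ⟨(x.1 : ℕ) - m, by have := x.1.isLt; have := x.2; omega⟩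
  invFun j := ⟨⟨m + (j : ℕ), by have := j.isLt; omega⟩, by simp⟩
  left_inv x := by
    ext
    have := x.2
    simp only []
    omega
  right_inv j := by
    ext
    simp only []
    omega

private lemma aux_clear_denom {n : ℕ} (v : Fin n → ℚ) :
    ∃ (d : ℤ) (w : Fin n → ℤ), d ≠ 0 ∧ ∀ j, (w j : ℚ) = d * v j := by
  classical
  set d : ℤ := ∏ j, ((v j).den : ℤ) with hd
  refine ⟨d, fun j => d / ((v j).den : ℤ) * (v j).num, ?_, ?_⟩
  · rw [hd]
    exact Finset.prod_ne_zero_iff.2 fun j _ => by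
      exact_mod_cast (v j).den_nz
  · intro j
    have hdvd : ((v j).den : ℤ) ∣ d := Finset.dvd_prod_of_mem _ (Finset.mem_univ j)
    have h1 : ((d / ((v j).den : ℤ) * ((v j).den : ℤ) : ℤ) : ℚ) = (d : ℚ) := by
      rw [Int.ediv_mul_cancel hdvd]
    have hnum : ((v j).num : ℚ) = v j * ((v j).den : ℚ) := by
      rw [Rat.mul_den_eq_num]
    push_cast at h1 ⊢
    rw [hnum, ← h1]
    ring

/-- A tuple of real numbers of `ℚ`-rank `m` can be transformed by a unimodular integer
matrix into a tuple whose last `n - m` entries vanish. -/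
theorem unimodular_reduction_of_rank
    (n m : ℕ) (α : Fin n → ℝ)
    (hrank : Module.finrank ℚ ↥(Submodule.span ℚ (Set.range α)) = m) :
    ∃ G : Matrix (Fin n) (Fin n) ℤ, IsUnit G.det ∧
      ∀ i : Fin n, m ≤ (i : ℕ) → (G.map (Int.cast : ℤ → ℝ)).mulVec α i = 0 := by
  classical
  -- the ℚ-linear combination map
  set g : (Fin n → ℚ) →ₗ[ℚ] ℝ := Fintype.linearCombination ℚ α with hgdef
  have hrange : LinearMap.range g = Submodule.span ℚ (Set.range α) :=
    Fintype.range_linearCombination ℚ α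
  have hsum : Module.finrank ℚ (LinearMap.range g) + Module.finrank ℚ (LinearMap.ker g)
      = n := by
    rw [LinearMap.finrank_range_add_finrank_ker g, Module.finrank_fin_fun]
  have hrangem : Module.finrank ℚ (LinearMap.range g) = m := by rw [hrange]; exact hrank
  have hmn : m ≤ n := by omega
  have hker : Module.finrank ℚ (LinearMap.ker g) = n - m := by omega
  -- the ℤ-linear combination map and its kernel
  set F : (Fin n → ℤ) →ₗ[ℤ] ℝ := Fintype.linearCombination ℤ α with hFdef
  set K := LinearMap.ker F with hKdef
  -- a basis of the ℚ-kernel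
  let c : Module.Basis (Fin (n - m)) ℚ (LinearMap.ker g) := Module.finBasisOfFinrankEq ℚ _ hker
  -- clear denominators
  choose d w hd hw using fun i => aux_clear_denom ((c i : Fin n → ℚ))
  -- the integer vectors lie in K
  have hwK : ∀ i, w i ∈ K := by
    intro i
    have hgc : g ((c i : Fin n → ℚ)) = 0 := (c i).2
    have : F (w i) = (d i : ℚ) • g ((c i : Fin n → ℚ)) := by
      simp only [hFdef, hgdef, Fintype.linearCombination_apply, Finset.smul_sum]
      refine Finset.sum_congr rfl fun j _ => ?_
      rw [← Int.cast_smul_eq_zsmul ℚ (w i j) (α j), hw i j, mul_smul]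
    rw [hKdef, LinearMap.mem_ker, this, hgc, smul_zero]
  -- linear independence of the integer vectors
  have hcli : LinearIndependent ℚ (fun i => ((c i : Fin n → ℚ))) :=
    c.linearIndependent.map' (LinearMap.ker g).subtype (Submodule.ker_subtype _)
  have hcli' : LinearIndependent ℚ (fun i => (d i : ℚ) • ((c i : Fin n → ℚ))) := by
    have := hcli.units_smul fun i => Units.mk0 ((d i : ℚ)) (by exact_mod_cast hd i)
    exact this
  have hcliZ : LinearIndependent ℤ (fun i => (d i : ℚ) • ((c i : Fin n → ℚ))) := by
    refine hcli'.restrict_scalars ?_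
    intro a b hab
    simpa [zsmul_eq_mul] using hab
  have hwli : LinearIndependent ℤ w := by
    let ψ : (Fin n → ℤ) →ₗ[ℤ] (Fin n → ℚ) :=
      ((Int.castAddHom ℚ).toIntLinearMap).compLeft (Fin n)
    refine LinearIndependent.of_comp ψ ?_
    have : (ψ ∘ w) = fun i => (d i : ℚ) • ((c i : Fin n → ℚ)) := by
      funext i
      funext j
      simp [ψ, LinearMap.compLeft, hw i j]
    rw [this]
    exact hcliZ
  have hwKli : LinearIndependent ℤ (fun i => (⟨w i, hwK i⟩ : K)) := by
    refine LinearIndependent.of_comp K.subtype ?_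
    exact hwli
  -- Smith normal form of K inside ℤⁿ
  obtain ⟨r, snf⟩ := K.smithNormalForm (Pi.basisFun ℤ (Fin n))
  haveI : Module.Finite ℤ K := Module.Finite.of_basis snf.bN
  have hrK : Module.finrank ℤ K = r := by
    rw [Module.finrank_eq_card_basis snf.bN, Fintype.card_fin]
  have hle : n - m ≤ r := by
    have := hwKli.fintype_card_le_finrank
    rwa [Fintype.card_fin, hrK] at this
  -- rows indexed by the range of snf.f are killed by F
  have hFrow : ∀ k : Fin r, F (snf.bM (snf.f k)) = 0 := by
    intro k
    have h0 : F ((snf.bN k : Fin n → ℤ)) = 0 := (snf.bN k).2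
    rw [snf.snf k, map_smul] at h0
    have ha : snf.a k ≠ 0 := by
      intro h
      apply snf.bN.ne_zero k
      have : ((snf.bN k : Fin n → ℤ)) = 0 := by rw [snf.snf k, h, zero_smul]
      exact Subtype.ext this
    rw [zsmul_eq_mul] at h0
    rcases mul_eq_zero.1 h0 with h | h
    · exact absurd (by exact_mod_cast h) ha
    · exact h
  -- choose a permutation sending the indices ≥ m into the range of snf.f
  set T : Finset (Fin n) := Finset.univ.image snf.f with hT
  have hTcard : T.card = r := by
    rw [hT, Finset.card_image_of_injective _ snf.f.injective, Finset.card_univ,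
      Fintype.card_fin]
  obtain ⟨B, hBT, hBcard⟩ : ∃ B ⊆ T, B.card = n - m :=
    Finset.exists_subset_card_eq (by omega)
  have cardA : Fintype.card {i : Fin n // m ≤ (i : ℕ)} = n - m :=
    (Fintype.card_congr (auxFinEquiv n m hmn)).trans (Fintype.card_fin _)
  have cardB : Fintype.card {i : Fin n // i ∈ B} = n - m := by
    rw [Fintype.card_coe, hBcard]
  have cardA' : Fintype.card {i : Fin n // ¬ m ≤ (i : ℕ)} = n - (n - m) := by
    rw [Fintype.card_subtype_compl, cardA, Fintype.card_fin]
  have cardB' : Fintype.card {i : Fin n // ¬ i ∈ B} = n - (n - m) := by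
    rw [Fintype.card_subtype_compl, cardB, Fintype.card_fin]
  let e1 : {i : Fin n // m ≤ (i : ℕ)} ≃ {i : Fin n // i ∈ B} :=
    Fintype.equivOfCardEq (cardA.trans cardB.symm)
  let e2 : {i : Fin n // ¬ m ≤ (i : ℕ)} ≃ {i : Fin n // ¬ i ∈ B} :=
    Fintype.equivOfCardEq (cardA'.trans cardB'.symm)
  let σ : Fin n ≃ Fin n :=
    (Equiv.sumCompl (fun i : Fin n => m ≤ (i : ℕ))).symm.trans
      ((e1.sumCongr e2).trans (Equiv.sumCompl (fun i : Fin n => i ∈ B)))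
  have hσ : ∀ i : Fin n, m ≤ (i : ℕ) → σ i ∈ B := by
    intro i hi
    simp only [σ, Equiv.trans_apply]
    rw [Equiv.sumCompl_symm_apply_of_pos (p := fun j : Fin n => m ≤ (j : ℕ)) hi]
    simp only [Equiv.sumCongr_apply, Sum.map_inl, Equiv.sumCompl_apply_inl]
    exact (e1 ⟨i, hi⟩).2
  -- define G
  refine ⟨Matrix.of (fun i j => snf.bM (σ i) j), ?_, ?_⟩
  · -- determinant is a unit
    let b' : Module.Basis (Fin n) ℤ (Fin n → ℤ) := snf.bM.reindex σ.symm
    have hmat : Matrix.of (fun i j => snf.bM (σ i) j)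
        = ((Pi.basisFun ℤ (Fin n)).toMatrix b').transpose := by
      ext i j
      simp [b', Module.Basis.toMatrix_apply, Pi.basisFun_repr, Module.Basis.reindex_apply,
        Matrix.transpose_apply]
    rw [hmat, Matrix.det_transpose]
    have hmul := Module.Basis.toMatrix_mul_toMatrix_flip (Pi.basisFun ℤ (Fin n)) b'
    exact IsUnit.of_mul_eq_one _ (by rw [← Matrix.det_mul, hmul, Matrix.det_one])
  · intro i hi
    have hmem : σ i ∈ T := hBT (hσ i hi)
    rw [hT, Finset.mem_image] at hmem
    obtain ⟨k, -, hk⟩ := hmem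
    have h0 := hFrow k
    rw [hFdef, Fintype.linearCombination_apply] at h0
    have h0' : ∑ j, ((snf.bM (snf.f k) j : ℝ)) * α j = 0 := by
      rw [← h0]
      exact Finset.sum_congr rfl fun j _ => (zsmul_eq_mul _ _).symm
    rw [hk] at h0'
    simpa [Matrix.mulVec, dotProduct, Matrix.map_apply, Matrix.of_apply] using h0'
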